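/- Let X and Y be independent rate-1 exponential random variables, R > 0, and define user 2's minimal total transmit power W(X,Y) = (e^R − 1)/Y if Y ≥ X; W(X,Y) = e^R(e^R − 1)/X if Y ≤ e^{−2R}X; and W(X,Y) = 2e^R/√(XY) − e^R/X − 1/Y otherwise. Then user 2's power diversity gain under hybrid NOMA assisted OFDMA equals 2: lim_{ρ→∞} −log P(W(X,Y) ≥ ρ) / log ρ = 2. -/

import Mathlib

set_option maxHeartbeats 1000000

open MeasureTheory ProbabilityTheory Filter

/-- User 2's minimal total transmit power as a function of its channel gains `a = h_{2,1}`,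
`b = h_{2,2}`: pure OMA if `b ≥ a`, pure NOMA if `b ≤ e^{-2R} a`, hybrid NOMA otherwise. -/
noncomputable def W (R a b : ℝ) : ℝ :=
  if a ≤ b then (Real.exp R - 1) / b
  else if b ≤ Real.exp (-(2 * R)) * a then Real.exp R * (Real.exp R - 1) / a
  else 2 * Real.exp R / Real.sqrt (a * b) - Real.exp R / a - 1 / b

open Real Set in
lemma expIic' {t : ℝ} (ht : 0 ≤ t) :
    expMeasure 1 (Iic t) = ENNReal.ofReal (1 - Real.exp (-t)) := by
  rw [expMeasure, gammaMeasure, withDensity_apply _ measurableSet_Iic]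
  have : ∫⁻ y in Iic t, gammaPDF 1 1 y = ∫⁻ y in Iic t, exponentialPDF 1 y := rfl
  rw [this, lintegral_exponentialPDF_eq_antiDeriv one_pos, if_pos ht, one_mul]

open Real Set in
lemma expIoc' {u v : ℝ} (hu : 0 ≤ u) (huv : u ≤ v) :
    expMeasure 1 (Ioc u v) = ENNReal.ofReal (Real.exp (-u) - Real.exp (-v)) := by
  have hv : 0 ≤ v := hu.trans huv
  have hU : expMeasure 1 (Iic u) + expMeasure 1 (Ioc u v) = expMeasure 1 (Iic v) := by
    rw [← measure_union (Iic_disjoint_Ioc le_rfl) measurableSet_Ioc, Iic_union_Ioc_eq_Iic huv]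
  rw [expIic' hu, expIic' hv] at hU
  have h2 : ENNReal.ofReal (1 - Real.exp (-v))
      = ENNReal.ofReal (1 - Real.exp (-u)) + ENNReal.ofReal (Real.exp (-u) - Real.exp (-v)) := by
    rw [← ENNReal.ofReal_add (by simp [Real.exp_le_one_iff, neg_nonpos.mpr hu])
      (by simp [sub_nonneg, Real.exp_le_exp.mpr (neg_le_neg huv)])]
    ring_nf
  rw [h2] at hU
  exact (ENNReal.add_right_inj ENNReal.ofReal_ne_top).mp hU

open Real in
lemma W_bound' {R a b : ℝ} (hR : 0 < R) (ha : 0 < a) (hb : 0 < b) :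
    W R a b ≤ exp R * (exp R - 1) / a ∧ W R a b ≤ exp R * (exp R - 1) / b := by
  have h1 : 1 < exp R := Real.one_lt_exp_iff.mpr hR
  unfold W
  split_ifs with hab hnoma
  · constructor
    · calc (exp R - 1) / b ≤ (exp R - 1) / a := by gcongr
        _ ≤ exp R * (exp R - 1) / a := by gcongr; nlinarith
    · gcongr; nlinarith
  · refine ⟨le_rfl, ?_⟩
    have : b ≤ a := hnoma.trans
      (by nlinarith [Real.exp_le_one_iff.mpr (by linarith : -(2*R) ≤ 0)])
    gcongr
  · push_neg at hab hnoma
    set s := Real.sqrt a with hs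
    set t := Real.sqrt b with ht
    have hs0 : 0 < s := Real.sqrt_pos.mpr ha
    have ht0 : 0 < t := Real.sqrt_pos.mpr hb
    have hsa : s ^ 2 = a := Real.sq_sqrt ha.le
    have htb : t ^ 2 = b := Real.sq_sqrt hb.le
    have hab' : Real.sqrt (a * b) = s * t := Real.sqrt_mul ha.le b
    have key : 2 * exp R / (s * t) - exp R / s ^ 2 - 1 / t ^ 2 ≤ exp R * (exp R - 1) / s ^ 2 := by
      have hexp : exp R * (exp R - 1) / s ^ 2 - (2 * exp R / (s * t) - exp R / s ^ 2 - 1 / t ^ 2)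
          = (exp R / s - 1 / t) ^ 2 := by field_simp; ring
      nlinarith [sq_nonneg (exp R / s - 1 / t)]
    have key' : 2 * exp R / Real.sqrt (a * b) - exp R / a - 1 / b
        ≤ exp R * (exp R - 1) / a := by rw [hab', ← hsa, ← htb]; exact key
    refine ⟨key', key'.trans ?_⟩
    gcongr

open Real Set in
lemma W_lower' {R ρ a b : ℝ} (hR : 0 < R) (hρ : 0 < ρ)
    (ha : a ∈ Ioc (exp R * (exp R - 1) / (2 * ρ)) (2 * (exp R * (exp R - 1) / (2 * ρ))))
    (hb : b ∈ Ioc 0 (exp (-(2 * R)) * (exp R * (exp R - 1) / (2 * ρ)))) :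
    ρ ≤ W R a b := by
  have h1 : 1 < exp R := Real.one_lt_exp_iff.mpr hR
  set ε := exp R * (exp R - 1) / (2 * ρ) with hε
  have hε0 : 0 < ε := div_pos (by nlinarith) (by linarith)
  obtain ⟨ha1, ha2⟩ := ha
  obtain ⟨hb1, hb2⟩ := hb
  have hexp1 : exp (-(2 * R)) ≤ 1 := Real.exp_le_one_iff.mpr (by linarith)
  have hexp0 : 0 < exp (-(2 * R)) := Real.exp_pos _
  have hba : b < a := lt_of_le_of_lt (hb2.trans (by nlinarith)) ha1
  have hnoma : b ≤ exp (-(2 * R)) * a := hb2.trans (by nlinarith)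
  unfold W
  rw [if_neg (not_le.mpr hba), if_pos hnoma]
  rw [le_div_iff₀ (by linarith : (0:ℝ) < a)]
  have h2ε : 2 * ε * ρ = exp R * (exp R - 1) := by
    rw [hε]; field_simp
  nlinarith

/-- Corollary 2: user 2's power diversity gain under hybrid NOMA assisted OFDMA equals 2,
where `X, Y` are user 2's i.i.d. rate-1 exponential channel gains on the two subcarriers:
`-log P(W(X,Y) ≥ ρ) / log ρ → 2` as `ρ → ∞`. -/
theorem stmt_14 {Ω : Type*} [MeasurableSpace Ω] (μ : Measure Ω) [IsProbabilityMeasure μ]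
    (X Y : Ω → ℝ) (hX : Measurable X) (hY : Measurable Y) (hXY : IndepFun X Y μ)
    (hXd : μ.map X = expMeasure 1) (hYd : μ.map Y = expMeasure 1)
    (R : ℝ) (hR : 0 < R) :
    Tendsto (fun ρ : ℝ =>
        -Real.log (μ {ω | ρ ≤ W R (X ω) (Y ω)}).toReal / Real.log ρ)
      atTop (nhds 2) := by
  classical
  open Real Set in
  set c := Real.exp R * (Real.exp R - 1) with hcdef
  have h1 : 1 < Real.exp R := Real.one_lt_exp_iff.mpr hR
  have hc : 0 < c := by nlinarith [Real.exp_pos R]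
  have hmapX : ∀ s : Set ℝ, MeasurableSet s → μ (X ⁻¹' s) = expMeasure 1 s := fun s hs => by
    rw [← hXd, Measure.map_apply hX hs]
  have hmapY : ∀ s : Set ℝ, MeasurableSet s → μ (Y ⁻¹' s) = expMeasure 1 s := fun s hs => by
    rw [← hYd, Measure.map_apply hY hs]
  have hprod : ∀ s t : Set ℝ, MeasurableSet s → MeasurableSet t →
      μ (X ⁻¹' s ∩ Y ⁻¹' t) = expMeasure 1 s * expMeasure 1 t := fun s t hs ht => by
    rw [hXY.measure_inter_preimage_eq_mul s t hs ht, hmapX s hs, hmapY t ht]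
  set K := Real.exp (-3) * Real.exp (-(2 * R)) * (c / 2) ^ 2 with hKdef
  have hKpos : 0 < K := by positivity
  have hbound : ∀ ρ : ℝ, max 2 c ≤ ρ →
      K / ρ ^ 2 ≤ (μ {ω | ρ ≤ W R (X ω) (Y ω)}).toReal ∧
      (μ {ω | ρ ≤ W R (X ω) (Y ω)}).toReal ≤ c ^ 2 / ρ ^ 2 := by
    intro ρ hρ'
    have hρ2 : (2:ℝ) ≤ ρ := le_trans (le_max_left _ _) hρ'
    have hρc : c ≤ ρ := le_trans (le_max_right _ _) hρ'
    have hρ0 : (0:ℝ) < ρ := by linarith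
    set ε := c / (2 * ρ) with hεdef
    have hε0 : 0 < ε := by positivity
    have hε1 : ε ≤ 1 := by rw [div_le_one (by positivity)]; linarith
    set δ := Real.exp (-(2 * R)) * ε with hδdef
    have hexp1 : Real.exp (-(2 * R)) ≤ 1 := Real.exp_le_one_iff.mpr (by linarith)
    have hδ0 : 0 < δ := by positivity
    have hδ1 : δ ≤ 1 := by nlinarith
    have hexpc : Real.exp (-(c/ρ)) ≤ 1 :=
      Real.exp_le_one_iff.mpr (neg_nonpos.mpr (by positivity))
    -- lower bound
    have hsub : X ⁻¹' (Ioc ε (2 * ε)) ∩ Y ⁻¹' (Ioc 0 δ) ⊆ {ω | ρ ≤ W R (X ω) (Y ω)} := by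
      rintro ω ⟨hx, hy⟩
      exact W_lower' hR hρ0 hx hy
    have hlow : ENNReal.ofReal ((Real.exp (-ε) - Real.exp (-(2 * ε))) * (1 - Real.exp (-δ)))
        ≤ μ {ω | ρ ≤ W R (X ω) (Y ω)} := by
      have hmono := measure_mono (μ := μ) hsub
      rw [hprod _ _ measurableSet_Ioc measurableSet_Ioc, expIoc' hε0.le (by linarith),
        expIoc' le_rfl hδ0.le] at hmono
      simp only [neg_zero, Real.exp_zero] at hmono
      have hnn : (0:ℝ) ≤ Real.exp (-ε) - Real.exp (-(2 * ε)) := by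
        have := Real.exp_le_exp.mpr (by linarith : -(2*ε) ≤ -ε)
        linarith
      rw [← ENNReal.ofReal_mul hnn] at hmono
      exact hmono
    -- upper bound
    have hup : μ {ω | ρ ≤ W R (X ω) (Y ω)}
        ≤ ENNReal.ofReal ((1 - Real.exp (-(c / ρ))) * (1 - Real.exp (-(c / ρ)))) := by
      have hsub2 : {ω | ρ ≤ W R (X ω) (Y ω)} ⊆
          (X ⁻¹' (Iic (c / ρ)) ∩ Y ⁻¹' (Iic (c / ρ))) ∪ (X ⁻¹' (Iic 0) ∪ Y ⁻¹' (Iic 0)) := by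
        intro ω hω
        by_cases hxa : X ω ≤ 0
        · exact Or.inr (Or.inl hxa)
        by_cases hyb : Y ω ≤ 0
        · exact Or.inr (Or.inr hyb)
        push_neg at hxa hyb
        obtain ⟨w1, w2⟩ := W_bound' hR hxa hyb
        have h1' : ρ ≤ c / X ω := le_trans hω w1
        have h2' : ρ ≤ c / Y ω := le_trans hω w2
        rw [le_div_iff₀ hxa] at h1'
        rw [le_div_iff₀ hyb] at h2'
        refine Or.inl ⟨?_, ?_⟩
        · simp only [Set.mem_preimage, Set.mem_Iic]
          rw [le_div_iff₀ hρ0]; nlinarith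
        · simp only [Set.mem_preimage, Set.mem_Iic]
          rw [le_div_iff₀ hρ0]; nlinarith
      calc μ {ω | ρ ≤ W R (X ω) (Y ω)}
          ≤ μ (X ⁻¹' (Iic (c / ρ)) ∩ Y ⁻¹' (Iic (c / ρ)))
            + (μ (X ⁻¹' (Iic 0)) + μ (Y ⁻¹' (Iic 0))) := by
            refine (measure_mono hsub2).trans ?_
            refine (measure_union_le _ _).trans ?_
            gcongr
            exact measure_union_le _ _
        _ = ENNReal.ofReal ((1 - Real.exp (-(c / ρ))) * (1 - Real.exp (-(c / ρ)))) := by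
            rw [hprod _ _ measurableSet_Iic measurableSet_Iic, hmapX _ measurableSet_Iic,
              hmapY _ measurableSet_Iic, expIic' le_rfl, expIic' (show (0:ℝ) ≤ c/ρ by positivity)]
            simp only [neg_zero, Real.exp_zero, sub_self, ENNReal.ofReal_zero, add_zero]
            rw [← ENNReal.ofReal_mul (by linarith : (0:ℝ) ≤ 1 - Real.exp (-(c/ρ)))]
    constructor
    · -- K / ρ^2 ≤ toReal
      have h3 : (Real.exp (-ε) - Real.exp (-(2 * ε))) * (1 - Real.exp (-δ))
          ≤ (μ {ω | ρ ≤ W R (X ω) (Y ω)}).toReal :=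
        (ENNReal.ofReal_le_iff_le_toReal (measure_ne_top μ _)).mp hlow
      refine le_trans ?_ h3
      have e1 : Real.exp (-ε) - Real.exp (-(2 * ε)) = Real.exp (-(2*ε)) * (Real.exp ε - 1) := by
        rw [mul_sub, ← Real.exp_add]; ring_nf
      have e2 : Real.exp (-(2:ℝ)) ≤ Real.exp (-(2 * ε)) := Real.exp_le_exp.mpr (by linarith)
      have e3 : ε ≤ Real.exp ε - 1 := by linarith [Real.add_one_le_exp ε]
      have hmulδ : Real.exp δ * Real.exp (-δ) = 1 := by
        rw [← Real.exp_add]; simp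
      have e4 : δ * Real.exp (-δ) ≤ 1 - Real.exp (-δ) := by
        nlinarith [Real.add_one_le_exp δ, Real.exp_pos (-δ), hmulδ]
      have e5 : Real.exp (-(1:ℝ)) ≤ Real.exp (-δ) := Real.exp_le_exp.mpr (by linarith)
      have e6 : Real.exp (-(2:ℝ)) * ε * (δ * Real.exp (-(1:ℝ)))
          ≤ (Real.exp (-ε) - Real.exp (-(2 * ε))) * (1 - Real.exp (-δ)) := by
        rw [e1]
        have l1 : Real.exp (-(2:ℝ)) * ε ≤ Real.exp (-(2*ε)) * (Real.exp ε - 1) := by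
          have := mul_le_mul e2 e3 hε0.le (Real.exp_pos _).le
          linarith
        have l2 : δ * Real.exp (-(1:ℝ)) ≤ 1 - Real.exp (-δ) := by
          nlinarith [mul_le_mul_of_nonneg_left e5 hδ0.le]
        exact mul_le_mul l1 l2 (by positivity) (mul_nonneg (Real.exp_pos _).le (by nlinarith [Real.add_one_le_exp ε]))
      refine le_trans (le_of_eq ?_) e6
      have hexp3 : Real.exp (-(2:ℝ)) * Real.exp (-(1:ℝ)) = Real.exp (-(3:ℝ)) := by
        rw [← Real.exp_add]; norm_num
      calc K / ρ ^ 2 = Real.exp (-(3:ℝ)) * Real.exp (-(2*R)) * ((c/2)^2 / ρ^2) := by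
            rw [hKdef]; ring
        _ = Real.exp (-(3:ℝ)) * Real.exp (-(2*R)) * ε ^ 2 := by
            congr 1
            rw [hεdef]; field_simp
        _ = Real.exp (-(2:ℝ)) * ε * (δ * Real.exp (-(1:ℝ))) := by
            rw [hδdef, ← hexp3]; ring
    · -- toReal ≤ c^2/ρ^2
      have h3 : (μ {ω | ρ ≤ W R (X ω) (Y ω)}).toReal
          ≤ (1 - Real.exp (-(c / ρ))) * (1 - Real.exp (-(c / ρ))) :=
        ENNReal.toReal_le_of_le_ofReal (by nlinarith) hup
      refine h3.trans ?_
      have t1 : 1 - Real.exp (-(c / ρ)) ≤ c / ρ := by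
        nlinarith [Real.add_one_le_exp (-(c/ρ))]
      have t0 : 0 ≤ 1 - Real.exp (-(c / ρ)) := by linarith
      calc (1 - Real.exp (-(c / ρ))) * (1 - Real.exp (-(c / ρ))) ≤ (c/ρ) * (c/ρ) := by
            exact mul_le_mul t1 t1 t0 (by positivity)
        _ = c ^ 2 / ρ ^ 2 := by field_simp
  -- limit
  have hloginv : Tendsto (fun ρ : ℝ => (Real.log ρ)⁻¹) atTop (nhds 0) :=
    Real.tendsto_log_atTop.inv_tendsto_atTop
  have hA : Tendsto (fun ρ : ℝ => 2 - Real.log (c ^ 2) * (Real.log ρ)⁻¹) atTop (nhds 2) := by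
    have := hloginv.const_mul (Real.log (c ^ 2))
    simpa using tendsto_const_nhds.sub this
  have hB : Tendsto (fun ρ : ℝ => 2 - Real.log K * (Real.log ρ)⁻¹) atTop (nhds 2) := by
    have := hloginv.const_mul (Real.log K)
    simpa using tendsto_const_nhds.sub this
  refine tendsto_of_tendsto_of_tendsto_of_le_of_le' hA hB ?_ ?_
  · filter_upwards [eventually_ge_atTop (max 2 c)] with ρ hρ
    obtain ⟨hPl, hPu⟩ := hbound ρ hρ
    have hρ2 : (2:ℝ) ≤ ρ := le_trans (le_max_left _ _) hρ
    have hρ0 : (0:ℝ) < ρ := by linarith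
    have hlogρ : 0 < Real.log ρ := Real.log_pos (by linarith)
    set P := (μ {ω | ρ ≤ W R (X ω) (Y ω)}).toReal with hPdef
    have hPpos : 0 < P := lt_of_lt_of_le (div_pos hKpos (by positivity)) hPl
    have hlogle : Real.log P ≤ Real.log (c ^ 2 / ρ ^ 2) := Real.log_le_log hPpos hPu
    have hlogeq : Real.log (c ^ 2 / ρ ^ 2) = Real.log (c ^ 2) - 2 * Real.log ρ := by
      rw [Real.log_div (by positivity) (by positivity)]
      simp only [Real.log_pow]
      push_cast; ring
    have hnum : 2 * Real.log ρ - Real.log (c ^ 2) ≤ -Real.log P := by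
      rw [hlogeq] at hlogle; linarith
    have : (2 * Real.log ρ - Real.log (c ^ 2)) / Real.log ρ ≤ -Real.log P / Real.log ρ := by
      gcongr
    refine le_trans (le_of_eq ?_) this
    field_simp
  · filter_upwards [eventually_ge_atTop (max 2 c)] with ρ hρ
    obtain ⟨hPl, hPu⟩ := hbound ρ hρ
    have hρ2 : (2:ℝ) ≤ ρ := le_trans (le_max_left _ _) hρ
    have hρ0 : (0:ℝ) < ρ := by linarith
    have hlogρ : 0 < Real.log ρ := Real.log_pos (by linarith)
    set P := (μ {ω | ρ ≤ W R (X ω) (Y ω)}).toReal with hPdef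
    have hPpos : 0 < P := lt_of_lt_of_le (div_pos hKpos (by positivity)) hPl
    have hlogle : Real.log (K / ρ ^ 2) ≤ Real.log P := Real.log_le_log (by positivity) hPl
    have hlogeq : Real.log (K / ρ ^ 2) = Real.log K - 2 * Real.log ρ := by
      rw [Real.log_div (by positivity) (by positivity)]
      simp only [Real.log_pow]
      push_cast; ring
    have hnum : -Real.log P ≤ 2 * Real.log ρ - Real.log K := by
      rw [hlogeq] at hlogle; linarith
    have : -Real.log P / Real.log ρ ≤ (2 * Real.log ρ - Real.log K) / Real.log ρ := by
      gcongr
    refine this.trans (le_of_eq ?_)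
    field_simp
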